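/- arXiv:0907.1561 — 6 statements merged into one kernel-verified Lean document; each statement's English description precedes it below -/
import Mathlib

section
/- Fix N ≥ 1, lengths τ_1,…,τ_N > 0, continuous potentials q_j : [0,τ_j] → ℝ, a real number λ > 0, and h ∈ ℝ. Let φ_j(·,λ) be the Neumann fundamental solution on branch j, and define Φ(λ) = ∏_{j=1}^N φ_j(0,λ) and Ψ(λ) = Σ_{j=1}^N φ_j'(0,λ) ∏_{k≠j} φ_k(0,λ). Then the following are equivalent: (i) there exist twice continuously differentiable functions y_j : [0,τ_j] → ℝ, not all identically zero, such that −y_j'' + q_j y_j = λ² y_j on [0,τ_j], y_j'(τ_j) = 0 for all j, y_1(0) = y_2(0) = ⋯ = y_N(0), and Σ_{j=1}^N y_j'(0) = h y_1(0); (ii) Ψ(λ) = h Φ(λ). -/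
/-- `φ` is the Neumann fundamental solution on `[0,τ]` for potential `q` at frequency `ω`:
it solves `−φ'' + q φ = ω² φ` on `[0,τ]` with terminal conditions `φ(τ) = 1`, `φ'(τ) = 0`. -/
def NeumannFS (τ : ℝ) (q : ℝ → ℝ) (ω : ℝ) (φ : ℝ → ℝ) : Prop :=
  ContDiff ℝ 2 φ ∧
  (∀ x ∈ Set.Icc 0 τ, -(deriv (deriv φ) x) + q x * φ x = ω ^ 2 * φ x) ∧
  φ τ = 1 ∧ deriv φ τ = 0

open Set

lemma ode_pair_eqOn {τ lam : ℝ} (hτ : 0 < τ) {q f g : ℝ → ℝ}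
    (hq : ContinuousOn q (Set.Icc 0 τ))
    (hf : ContDiff ℝ 2 f) (hg : ContDiff ℝ 2 g)
    (hfe : ∀ x ∈ Set.Icc 0 τ, -(deriv (deriv f) x) + q x * f x = lam ^ 2 * f x)
    (hge : ∀ x ∈ Set.Icc 0 τ, -(deriv (deriv g) x) + q x * g x = lam ^ 2 * g x)
    (c : ℝ) (hc : c = 0 ∨ c = τ)
    (h1 : f c = g c) (h2 : deriv f c = deriv g c) :
    ∀ x ∈ Set.Icc 0 τ, f x = g x ∧ deriv f x = deriv g x := by
  obtain ⟨C, hC⟩ := (isCompact_Icc (a := (0:ℝ)) (b := τ)).exists_bound_of_continuousOn hq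
  set Q : ℝ → ℝ := fun t => if t ∈ Set.Icc 0 τ then q t else 0 with hQ
  have hQb : ∀ t, |Q t - lam ^ 2| ≤ |C| + lam ^ 2 := by
    intro t
    have h1 : |Q t| ≤ |C| := by
      by_cases ht : t ∈ Set.Icc 0 τ
      · have : Q t = q t := if_pos ht
        rw [this]; exact le_trans (hC t ht) (le_abs_self C)
      · have : Q t = 0 := if_neg ht
        simp [this]
    have h2 : |lam ^ 2| = lam ^ 2 := abs_of_nonneg (sq_nonneg lam)
    have := abs_sub (Q t) (lam ^ 2)
    linarith
  set K : NNReal := Real.toNNReal (max 1 (|C| + lam ^ 2)) with hK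
  have hKc : (K : ℝ) = max 1 (|C| + lam ^ 2) := by
    rw [hK, Real.coe_toNNReal]
    exact le_trans zero_le_one (le_max_left _ _)
  set v : ℝ → ℝ × ℝ → ℝ × ℝ := fun t p => (p.2, (Q t - lam ^ 2) * p.1) with hv
  have hlip : ∀ t, LipschitzOnWith K (v t) Set.univ := by
    intro t
    apply LipschitzWith.lipschitzOnWith
    apply LipschitzWith.of_dist_le_mul
    intro p p'
    rw [Prod.dist_eq, Prod.dist_eq, hKc]
    have e1 : dist ((Q t - lam ^ 2) * p.1) ((Q t - lam ^ 2) * p'.1)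
        = |Q t - lam ^ 2| * dist p.1 p'.1 := by
      rw [Real.dist_eq, Real.dist_eq, ← mul_sub, abs_mul]
    have d1 : (0:ℝ) ≤ dist p.1 p'.1 := dist_nonneg
    have d2 : (0:ℝ) ≤ dist p.2 p'.2 := dist_nonneg
    have m1 : dist p.1 p'.1 ≤ max (dist p.1 p'.1) (dist p.2 p'.2) := le_max_left _ _
    have m2 : dist p.2 p'.2 ≤ max (dist p.1 p'.1) (dist p.2 p'.2) := le_max_right _ _
    have k1 : (1:ℝ) ≤ max 1 (|C| + lam ^ 2) := le_max_left _ _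
    have k2 : |Q t - lam ^ 2| ≤ max 1 (|C| + lam ^ 2) :=
      le_trans (hQb t) (le_max_right _ _)
    have kq : (0:ℝ) ≤ |Q t - lam ^ 2| := abs_nonneg _
    simp only [hv]
    apply max_le
    · nlinarith
    · rw [e1]
      nlinarith
  have hfd : Differentiable ℝ f := hf.differentiable two_ne_zero
  have hgd : Differentiable ℝ g := hg.differentiable two_ne_zero
  have hfd2 : Differentiable ℝ (deriv f) :=
    ((contDiff_succ_iff_deriv (n := 1)).mp
      (by norm_num at hf ⊢; exact hf)).2.2.differentiable one_ne_zero
  have hgd2 : Differentiable ℝ (deriv g) :=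
    ((contDiff_succ_iff_deriv (n := 1)).mp
      (by norm_num at hg ⊢; exact hg)).2.2.differentiable one_ne_zero
  set F := fun t => (f t, deriv f t) with hF
  set G := fun t => (g t, deriv g t) with hG
  have hFd : ∀ t ∈ Set.Icc 0 τ, HasDerivAt F (v t (F t)) t := by
    intro t ht
    have hd : HasDerivAt F (deriv f t, deriv (deriv f) t) t :=
      (hfd t).hasDerivAt.prodMk (hfd2 t).hasDerivAt
    have he : v t (F t) = (deriv f t, deriv (deriv f) t) := by
      have heq := hfe t ht
      have hQt : Q t = q t := if_pos ht
      simp only [hv, hF, hQt]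
      have : deriv (deriv f) t = (q t - lam ^ 2) * f t := by ring_nf; ring_nf at heq; linarith
      rw [this]
    rwa [he]
  have hGd : ∀ t ∈ Set.Icc 0 τ, HasDerivAt G (v t (G t)) t := by
    intro t ht
    have hd : HasDerivAt G (deriv g t, deriv (deriv g) t) t :=
      (hgd t).hasDerivAt.prodMk (hgd2 t).hasDerivAt
    have he : v t (G t) = (deriv g t, deriv (deriv g) t) := by
      have heq := hge t ht
      have hQt : Q t = q t := if_pos ht
      simp only [hv, hG, hQt]
      have : deriv (deriv g) t = (q t - lam ^ 2) * g t := by ring_nf; ring_nf at heq; linarith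
      rw [this]
    rwa [he]
  have hFc : ContinuousOn F (Set.Icc 0 τ) :=
    (hfd.continuous.prodMk hfd2.continuous).continuousOn
  have hGc : ContinuousOn G (Set.Icc 0 τ) :=
    (hgd.continuous.prodMk hgd2.continuous).continuousOn
  have hFG : F c = G c := by simp [hF, hG, h1, h2]
  have key : Set.EqOn F G (Set.Icc 0 τ) := by
    rcases hc with rfl | rfl
    · exact ODE_solution_unique_of_mem_Icc_right (fun t _ => hlip t) hFc
        (fun t ht => (hFd t (Set.Ico_subset_Icc_self ht)).hasDerivWithinAt)
        (fun _ _ => Set.mem_univ _) hGc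
        (fun t ht => (hGd t (Set.Ico_subset_Icc_self ht)).hasDerivWithinAt)
        (fun _ _ => Set.mem_univ _) hFG
    · exact ODE_solution_unique_of_mem_Icc_left (fun t _ => hlip t) hFc
        (fun t ht => (hFd t (Set.Ioc_subset_Icc_self ht)).hasDerivWithinAt)
        (fun _ _ => Set.mem_univ _) hGc
        (fun t ht => (hGd t (Set.Ioc_subset_Icc_self ht)).hasDerivWithinAt)
        (fun _ _ => Set.mem_univ _) hFG
  intro x hx
  have := key hx
  exact ⟨congrArg Prod.fst this, congrArg Prod.snd this⟩

/-- derivative of a constant multiple, function version -/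
private lemma deriv_cm (a : ℝ) (φ : ℝ → ℝ) :
    deriv (fun x => a * φ x) = fun x => a * deriv φ x :=
  deriv_const_mul_field' a

private lemma deriv2_cm (a : ℝ) (φ : ℝ → ℝ) :
    deriv (deriv (fun x => a * φ x)) = fun x => a * deriv (deriv φ) x := by
  rw [deriv_cm]; exact deriv_cm a (deriv φ)

/-- the Neumann fundamental solution has nontrivial Cauchy data at 0 -/
private lemma phi_nontriv {τ lam : ℝ} (hτ : 0 < τ) {q φ : ℝ → ℝ}
    (hq : ContinuousOn q (Set.Icc 0 τ)) (hφ : NeumannFS τ q lam φ) :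
    φ 0 ≠ 0 ∨ deriv φ 0 ≠ 0 := by
  by_contra hcon
  push_neg at hcon
  obtain ⟨h0, h0'⟩ := hcon
  have hz : ∀ x ∈ Set.Icc 0 τ, φ x = (fun _ : ℝ => (0:ℝ)) x ∧
      deriv φ x = deriv (fun _ : ℝ => (0:ℝ)) x := by
    apply ode_pair_eqOn hτ hq hφ.1 contDiff_const hφ.2.1
    · intro x hx
      simp [deriv_const']
    · exact Or.inl rfl
    · exact h0
    · simp [deriv_const', h0']
  have := (hz τ ⟨hτ.le, le_rfl⟩).1
  rw [hφ.2.2.1] at this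
  simpa using this

/-- any solution with Neumann condition at τ is a multiple of φ -/
private lemma rep_lemma {τ lam : ℝ} (hτ : 0 < τ) {q φ y : ℝ → ℝ}
    (hq : ContinuousOn q (Set.Icc 0 τ)) (hφ : NeumannFS τ q lam φ)
    (hy2 : ContDiff ℝ 2 y)
    (hyeq : ∀ x ∈ Set.Icc 0 τ, -(deriv (deriv y) x) + q x * y x = lam ^ 2 * y x)
    (hyτ : deriv y τ = 0) :
    ∀ x ∈ Set.Icc 0 τ, y x = y τ * φ x ∧ deriv y x = y τ * deriv φ x := by
  have key : ∀ x ∈ Set.Icc 0 τ, y x = (fun x => y τ * φ x) x ∧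
      deriv y x = deriv (fun x => y τ * φ x) x := by
    apply ode_pair_eqOn hτ hq hy2 (contDiff_const.mul hφ.1) hyeq
    · intro x hx
      rw [deriv2_cm]
      have := hφ.2.1 x hx
      simp only
      linear_combination y τ * this
    · exact Or.inr rfl
    · rw [hφ.2.2.1]; ring
    · rw [deriv_cm]; simp only [hφ.2.2.2, hyτ]; ring
  intro x hx
  obtain ⟨e1, e2⟩ := key x hx
  rw [deriv_cm] at e2
  exact ⟨e1, e2⟩


/-- **Characteristic equation for the eigenvalues.** λ² > 0 is an eigenvalue of
the Schrodinger operator on the compact star-shaped graph, with Neumann terminal conditions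
and node parameter h, if and only if Ψ(λ) = h Φ(λ), where Φ(λ) = Π_j φ_j(0,λ) and
Ψ(λ) = Σ_j φ_j'(0,λ) Π_{k ≠ j} φ_k(0,λ). -/
theorem characteristic_equation
    (N : ℕ) (hN : 0 < N) (τ : Fin N → ℝ) (hτ : ∀ j, 0 < τ j)
    (q : Fin N → ℝ → ℝ) (hq : ∀ j, ContinuousOn (q j) (Set.Icc 0 (τ j)))
    (lam : ℝ) (hlam : 0 < lam) (h : ℝ)
    (φ : Fin N → ℝ → ℝ)
    (hφ : ∀ j, NeumannFS (τ j) (q j) lam (φ j)) :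
    (∃ y : Fin N → ℝ → ℝ,
      (∀ j, ContDiff ℝ 2 (y j)) ∧
      (∀ j, ∀ x ∈ Set.Icc 0 (τ j),
        -(deriv (deriv (y j)) x) + q j x * y j x = lam ^ 2 * y j x) ∧
      (∀ j, deriv (y j) (τ j) = 0) ∧
      (∀ j k, y j 0 = y k 0) ∧
      (∑ j, deriv (y j) 0 = h * y ⟨0, hN⟩ 0) ∧
      (∃ j, ∃ x ∈ Set.Icc 0 (τ j), y j x ≠ 0))
    ↔ ∑ j, deriv (φ j) 0 * ∏ k ∈ Finset.univ.erase j, φ k 0 =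
        h * ∏ j, φ j 0 := by
  constructor
  · rintro ⟨y, hy2, hyeq, hyτ, hycont, hysum, j₀, x₀, hx₀, hy₀⟩
    set a : Fin N → ℝ := fun j => y j (τ j) with ha
    have hrep : ∀ j, ∀ x ∈ Set.Icc 0 (τ j),
        y j x = a j * φ j x ∧ deriv (y j) x = a j * deriv (φ j) x :=
      fun j => rep_lemma (hτ j) (hq j) (hφ j) (hy2 j) (hyeq j) (hyτ j)
    have h0mem : ∀ j, (0:ℝ) ∈ Set.Icc 0 (τ j) := fun j => ⟨le_rfl, (hτ j).le⟩
    have hy0 : ∀ j, y j 0 = a j * φ j 0 := fun j => (hrep j 0 (h0mem j)).1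
    have hy0' : ∀ j, deriv (y j) 0 = a j * deriv (φ j) 0 := fun j => (hrep j 0 (h0mem j)).2
    set v : ℝ := y ⟨0, hN⟩ 0 with hv
    have hveq : ∀ j, a j * φ j 0 = v := fun j => (hy0 j).symm.trans (hycont j ⟨0, hN⟩)
    have hsum' : ∑ j, a j * deriv (φ j) 0 = h * v := by
      rw [← hysum]; exact Finset.sum_congr rfl fun j _ => (hy0' j).symm
    have hnz : ∃ j, a j ≠ 0 := by
      refine ⟨j₀, fun hz => hy₀ ?_⟩
      rw [(hrep j₀ x₀ hx₀).1, hz, zero_mul]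
    by_cases hall : ∀ k, φ k 0 ≠ 0
    · have hvne : v ≠ 0 := by
        intro hv0
        obtain ⟨j, hj⟩ := hnz
        have := hveq j
        rw [hv0] at this
        exact hj ((mul_eq_zero.mp this).resolve_right (hall j))
      apply mul_left_cancel₀ hvne
      have term : ∀ j, v * (deriv (φ j) 0 * ∏ k ∈ Finset.univ.erase j, φ k 0)
          = (a j * deriv (φ j) 0) * ∏ k, φ k 0 := by
        intro j
        rw [← Finset.mul_prod_erase Finset.univ (fun k => φ k 0) (Finset.mem_univ j),
          ← hveq j]
        ring
      rw [Finset.mul_sum]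
      calc ∑ j, v * (deriv (φ j) 0 * ∏ k ∈ Finset.univ.erase j, φ k 0)
          = ∑ j, (a j * deriv (φ j) 0) * ∏ k, φ k 0 :=
            Finset.sum_congr rfl fun j _ => term j
        _ = (∑ j, a j * deriv (φ j) 0) * ∏ k, φ k 0 := (Finset.sum_mul _ _ _).symm
        _ = (h * v) * ∏ k, φ k 0 := by rw [hsum']
        _ = v * (h * ∏ j, φ j 0) := by ring
    · push_neg at hall
      obtain ⟨m, hm⟩ := hall
      have hΦ : ∏ j, φ j 0 = 0 := Finset.prod_eq_zero (Finset.mem_univ m) hm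
      rw [hΦ, mul_zero]
      by_cases hrest : ∀ k, k ≠ m → φ k 0 ≠ 0
      · exfalso
        have hv0 : v = 0 := by rw [← hveq m, hm, mul_zero]
        have hak : ∀ k, k ≠ m → a k = 0 := by
          intro k hk
          have := hveq k
          rw [hv0] at this
          exact (mul_eq_zero.mp this).resolve_right (hrest k hk)
        have hdm : deriv (φ m) 0 ≠ 0 :=
          (phi_nontriv (hτ m) (hq m) (hφ m)).resolve_left (not_not_intro hm)
        have hsm : a m * deriv (φ m) 0 = 0 := by
          have hs := hsum'
          rw [hv0, mul_zero] at hs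
          have e : ∑ j, a j * deriv (φ j) 0 = a m * deriv (φ m) 0 := by
            apply Finset.sum_eq_single
            · intro b _ hb; simp only [hak b hb, zero_mul]
            · intro hb; exact absurd (Finset.mem_univ m) hb
          exact e.symm.trans hs
        have ham : a m = 0 := (mul_eq_zero.mp hsm).resolve_right hdm
        obtain ⟨j, hj⟩ := hnz
        rcases eq_or_ne j m with rfl | hjm
        · exact hj ham
        · exact hj (hak j hjm)
      · push_neg at hrest
        obtain ⟨m', hm'ne, hm'0⟩ := hrest
        apply Finset.sum_eq_zero
        intro j _
        rcases eq_or_ne j m with rfl | hjm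
        · rw [Finset.prod_eq_zero (Finset.mem_erase.mpr ⟨hm'ne, Finset.mem_univ _⟩) hm'0,
            mul_zero]
        · rw [Finset.prod_eq_zero (Finset.mem_erase.mpr ⟨Ne.symm hjm, Finset.mem_univ _⟩) hm,
            mul_zero]
  · intro hΨ
    set c : Fin N → ℝ := fun j => ∏ k ∈ Finset.univ.erase j, φ k 0 with hc
    by_cases hcz : ∃ j, c j ≠ 0
    · obtain ⟨j₁, hj₁⟩ := hcz
      refine ⟨fun j => fun x => c j * φ j x, ?_, ?_, ?_, ?_, ?_, ?_⟩
      · exact fun j => contDiff_const.mul (hφ j).1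
      · intro j x hx
        rw [deriv2_cm]
        simp only
        linear_combination c j * ((hφ j).2.1 x hx)
      · intro j
        rw [deriv_cm]
        simp only [(hφ j).2.2.2, mul_zero]
      · intro j k
        simp only
        rw [mul_comm, Finset.mul_prod_erase Finset.univ (fun k => φ k 0) (Finset.mem_univ j),
          mul_comm, Finset.mul_prod_erase Finset.univ (fun i => φ i 0) (Finset.mem_univ k)]
      · simp only [deriv_cm]
        have e1 : ∑ j, c j * deriv (φ j) 0 = ∑ j, deriv (φ j) 0 * c j :=
          Finset.sum_congr rfl fun j _ => mul_comm _ _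
        rw [e1, hΨ, mul_comm (c ⟨0, hN⟩),
          Finset.mul_prod_erase Finset.univ (fun k => φ k 0) (Finset.mem_univ _)]
      · refine ⟨j₁, τ j₁, ⟨(hτ j₁).le, le_rfl⟩, ?_⟩
        simp only [(hφ j₁).2.2.1, mul_one]
        exact hj₁
    · push_neg at hcz
      obtain ⟨m, hmmem, hm0⟩ := Finset.prod_eq_zero_iff.mp (hcz ⟨0, hN⟩)
      obtain ⟨m', hm'mem, hm'0⟩ := Finset.prod_eq_zero_iff.mp (hcz m)
      have hne : m' ≠ m := (Finset.mem_erase.mp hm'mem).1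
      have hdm' : deriv (φ m') 0 ≠ 0 :=
        (phi_nontriv (hτ m') (hq m') (hφ m')).resolve_left (not_not_intro hm'0)
      set cc : ℝ := - deriv (φ m) 0 / deriv (φ m') 0 with hcc
      set y : Fin N → ℝ → ℝ := fun j =>
        if j = m then φ m else if j = m' then (fun x => cc * φ m' x) else (fun _ => 0) with hy
      have hym : y m = φ m := if_pos rfl
      have hym' : y m' = fun x => cc * φ m' x := by
        rw [hy]; simp [hne]
      have hyo : ∀ j, j ≠ m → j ≠ m' → y j = fun _ => 0 := by
        intro j h1 h2
        rw [hy]; simp only [if_neg h1, if_neg h2]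
      have hz0 : ∀ j, y j 0 = 0 := by
        intro j
        rcases eq_or_ne j m with rfl | h1
        · rw [hym]; exact hm0
        rcases eq_or_ne j m' with rfl | h2
        · rw [hym']; simp [hm'0]
        · rw [hyo j h1 h2]
      refine ⟨y, ?_, ?_, ?_, ?_, ?_, ?_⟩
      · intro j
        rcases eq_or_ne j m with rfl | h1
        · rw [hym]; exact (hφ j).1
        rcases eq_or_ne j m' with rfl | h2
        · rw [hym']; exact contDiff_const.mul (hφ j).1
        · rw [hyo j h1 h2]; exact contDiff_const
      · intro j x hx
        rcases eq_or_ne j m with rfl | h1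
        · rw [hym]; exact (hφ j).2.1 x hx
        rcases eq_or_ne j m' with rfl | h2
        · rw [hym', deriv2_cm]
          simp only
          linear_combination cc * ((hφ j).2.1 x hx)
        · rw [hyo j h1 h2]
          simp [deriv_const']
      · intro j
        rcases eq_or_ne j m with rfl | h1
        · rw [hym]; exact (hφ j).2.2.2
        rcases eq_or_ne j m' with rfl | h2
        · rw [hym', deriv_cm]; simp only [(hφ j).2.2.2, mul_zero]
        · rw [hyo j h1 h2]; simp [deriv_const']
      · intro j k; rw [hz0 j, hz0 k]
      · rw [hz0 ⟨0, hN⟩, mul_zero]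
        have hvanish : ∀ j ∈ Finset.univ, j ∉ ({m, m'} : Finset (Fin N)) →
            deriv (y j) 0 = 0 := by
          intro j _ hj
          simp only [Finset.mem_insert, Finset.mem_singleton, not_or] at hj
          rw [hyo j hj.1 hj.2]
          simp [deriv_const']
        rw [← Finset.sum_subset (Finset.subset_univ ({m, m'} : Finset (Fin N))) hvanish,
          Finset.sum_pair (Ne.symm hne)]
        rw [hym, hym', deriv_cm]
        show deriv (φ m) 0 + cc * deriv (φ m') 0 = 0
        rw [hcc]
        field_simp
        ring
      · refine ⟨m, τ m, ⟨(hτ m).le, le_rfl⟩, ?_⟩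
        rw [hym, (hφ m).2.2.1]
        exact one_ne_zero
end

section
/- Fix N ≥ 1, lengths τ_1,…,τ_N > 0, and two families of continuous potentials q_j, q̃_j : [0,τ_j] → ℝ with Neumann fundamental solutions φ_j(·,ω), φ̃_j(·,ω). Define Φ(ω) = ∏_{j=1}^N φ_j(0,ω), Ψ(ω) = Σ_{j=1}^N φ_j'(0,ω) ∏_{k≠j} φ_k(0,ω), and similarly Φ̃, Ψ̃. Then for every ω ∈ ℝ: Σ_{j=1}^N (∏_{k≠j} φ_k(0,ω) φ̃_k(0,ω)) ∫_0^{τ_j} (q̃_j(x) − q_j(x)) φ_j(x,ω) φ̃_j(x,ω) dx = Ψ(ω) Φ̃(ω) − Φ(ω) Ψ̃(ω). In particular, if Φ Ψ̃ = Φ̃ Ψ identically on ℝ, then Σ_{j=1}^N (∏_{k≠j} φ_k(0,ω) φ̃_k(0,ω)) ∫_0^{τ_j} (q̃_j − q_j) φ_j(·,ω) φ̃_j(·,ω) = 0 for every ω ∈ ℝ. -/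
/-- Wronskian-type identity for a single interval: the integral of the difference of
potentials against the product of the two fundamental solutions equals the Wronskian at 0. -/
lemma key_integral (ω τ : ℝ) (hτ : 0 < τ) (q qt : ℝ → ℝ)
    (hq : ContinuousOn q (Set.Icc 0 τ)) (hqt : ContinuousOn qt (Set.Icc 0 τ))
    (f g : ℝ → ℝ) (hf : NeumannFS τ q ω f) (hg : NeumannFS τ qt ω g) :
    ∫ x in (0:ℝ)..τ, (qt x - q x) * f x * g x =
      deriv f 0 * g 0 - f 0 * deriv g 0 := by
  obtain ⟨hf2, hfeq, hfτ, hfτ'⟩ := hf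
  obtain ⟨hg2, hgeq, hgτ, hgτ'⟩ := hg
  have hfd : Differentiable ℝ f := hf2.differentiable (by norm_num)
  have hgd : Differentiable ℝ g := hg2.differentiable (by norm_num)
  have hfd2 : Differentiable ℝ (deriv f) := by
    have := (contDiff_succ_iff_deriv.mp (show ContDiff ℝ (1+1) f by exact_mod_cast hf2)).2.2
    exact this.differentiable (by norm_num)
  have hgd2 : Differentiable ℝ (deriv g) := by
    have := (contDiff_succ_iff_deriv.mp (show ContDiff ℝ (1+1) g by exact_mod_cast hg2)).2.2
    exact this.differentiable (by norm_num)
  set V : ℝ → ℝ := fun x => f x * deriv g x - deriv f x * g x with hV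
  have hderiv : ∀ x ∈ Set.uIcc (0:ℝ) τ,
      HasDerivAt V ((qt x - q x) * f x * g x) x := by
    intro x hx
    rw [Set.uIcc_of_le hτ.le] at hx
    have h1 := (((hfd x).hasDerivAt.mul ((hgd2 x).hasDerivAt)).sub
        (((hfd2 x).hasDerivAt.mul ((hgd x).hasDerivAt))))
    refine h1.congr_deriv ?_
    have e1 := hfeq x hx
    have e2 := hgeq x hx
    have e3 : deriv (deriv f) x = q x * f x - ω ^ 2 * f x := by linarith
    have e4 : deriv (deriv g) x = qt x * g x - ω ^ 2 * g x := by linarith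
    rw [e3, e4]; ring
  have hcont : IntervalIntegrable (fun x => (qt x - q x) * f x * g x)
      MeasureTheory.volume 0 τ := by
    apply ContinuousOn.intervalIntegrable
    rw [Set.uIcc_of_le hτ.le]
    exact ((hqt.sub hq).mul hfd.continuous.continuousOn).mul hgd.continuous.continuousOn
  have := intervalIntegral.integral_eq_sub_of_hasDerivAt hderiv hcont
  rw [this, hV]
  simp only [hfτ, hgτ, hfτ', hgτ']
  ring

/-- **Proposition on the difference of potentials.** For all real ω,
Σ_j (Π_{k ≠ j} φ_k(0,ω) φ~_k(0,ω)) ∫_0^{τ_j} (q~_j − q_j) φ_j φ~_j = Ψ(ω)Φ~(ω) − Φ(ω)Ψ~(ω);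
in particular this sum vanishes identically when Φ Ψ~ = Φ~ Ψ on ℝ. -/
theorem difference_identity
    (N : ℕ) (hN : 0 < N) (τ : Fin N → ℝ) (hτ : ∀ j, 0 < τ j)
    (q qt : Fin N → ℝ → ℝ)
    (hq : ∀ j, ContinuousOn (q j) (Set.Icc 0 (τ j)))
    (hqt : ∀ j, ContinuousOn (qt j) (Set.Icc 0 (τ j)))
    (φ φt : Fin N → ℝ → ℝ → ℝ)
    (hφ : ∀ j (ω : ℝ), NeumannFS (τ j) (q j) ω (fun x => φ j x ω))
    (hφt : ∀ j (ω : ℝ), NeumannFS (τ j) (qt j) ω (fun x => φt j x ω)) :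
    (∀ ω : ℝ,
      ∑ j, (∏ k ∈ Finset.univ.erase j, φ k 0 ω * φt k 0 ω) *
          ∫ x in (0:ℝ)..(τ j), (qt j x - q j x) * φ j x ω * φt j x ω =
        (∑ j, deriv (fun x => φ j x ω) 0 * ∏ k ∈ Finset.univ.erase j, φ k 0 ω) *
            (∏ j, φt j 0 ω) -
          (∏ j, φ j 0 ω) *
            (∑ j, deriv (fun x => φt j x ω) 0 * ∏ k ∈ Finset.univ.erase j, φt k 0 ω)) ∧
    ((∀ ω : ℝ,
        (∏ j, φ j 0 ω) *
            (∑ j, deriv (fun x => φt j x ω) 0 * ∏ k ∈ Finset.univ.erase j, φt k 0 ω) =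
          (∏ j, φt j 0 ω) *
            (∑ j, deriv (fun x => φ j x ω) 0 * ∏ k ∈ Finset.univ.erase j, φ k 0 ω)) →
      ∀ ω : ℝ,
        ∑ j, (∏ k ∈ Finset.univ.erase j, φ k 0 ω * φt k 0 ω) *
            ∫ x in (0:ℝ)..(τ j), (qt j x - q j x) * φ j x ω * φt j x ω = 0) := by
  have main : ∀ ω : ℝ,
      ∑ j, (∏ k ∈ Finset.univ.erase j, φ k 0 ω * φt k 0 ω) *
          ∫ x in (0:ℝ)..(τ j), (qt j x - q j x) * φ j x ω * φt j x ω =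
        (∑ j, deriv (fun x => φ j x ω) 0 * ∏ k ∈ Finset.univ.erase j, φ k 0 ω) *
            (∏ j, φt j 0 ω) -
          (∏ j, φ j 0 ω) *
            (∑ j, deriv (fun x => φt j x ω) 0 * ∏ k ∈ Finset.univ.erase j, φt k 0 ω) := by
    intro ω
    have key : ∀ j, (∫ x in (0:ℝ)..(τ j), (qt j x - q j x) * φ j x ω * φt j x ω) =
        deriv (fun x => φ j x ω) 0 * φt j 0 ω -
          φ j 0 ω * deriv (fun x => φt j x ω) 0 := fun j =>
      key_integral ω (τ j) (hτ j) (q j) (qt j) (hq j) (hqt j)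
        (fun x => φ j x ω) (fun x => φt j x ω) (hφ j ω) (hφt j ω)
    simp only [key]
    rw [Finset.sum_mul, Finset.mul_sum, ← Finset.sum_sub_distrib]
    refine Finset.sum_congr rfl fun j _ => ?_
    rw [Finset.prod_mul_distrib,
      ← Finset.mul_prod_erase Finset.univ (fun k => φ k 0 ω) (Finset.mem_univ j),
      ← Finset.mul_prod_erase Finset.univ (fun k => φt k 0 ω) (Finset.mem_univ j)]
    ring
  refine ⟨main, fun h ω => ?_⟩
  have h1 := main ω
  have h2 := h ω
  rw [h1]
  nlinarith [h2]
end

section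
/- Let m, m̃ ≥ 1 be integers, let n_1,…,n_m and ñ_1,…,ñ_{m̃} be positive integers, and let 0 < τ_1 < τ_2 < ⋯ < τ_m and 0 < τ̃_1 < τ̃_2 < ⋯ < τ̃_{m̃} be real numbers. If Σ_{j=1}^m n_j tan(ω τ_j) = Σ_{k=1}^{m̃} ñ_k tan(ω τ̃_k) for every ω > 0 at which all the quantities tan(ω τ_j) and tan(ω τ̃_k) are defined (i.e. ω τ_j and ω τ̃_k avoid π/2 + πℤ), then m = m̃ and τ_j = τ̃_j, n_j = ñ_j for every j = 1,…,m. -/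
open Real Filter Topology Set

private lemma countable_cos_zero (T : ℝ) (hT : T ≠ 0) :
    {y : ℝ | Real.cos (y * T) = 0}.Countable := by
  have hsub : {y : ℝ | Real.cos (y * T) = 0} ⊆
      Set.range (fun k : ℤ => ((2 * (k:ℝ) + 1) * Real.pi / 2) / T) := by
    intro y hy
    rcases Real.cos_eq_zero_iff.1 hy with ⟨k, hk⟩
    refine ⟨k, ?_⟩
    show ((2 * (k:ℝ) + 1) * Real.pi / 2) / T = y
    rw [← hk, mul_div_cancel_right₀ _ hT]
  exact (Set.countable_range _).mono hsub

private lemma freq_cos_ne (T : ℝ) (hT : T ≠ 0) (x : ℝ) :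
    ∃ᶠ y in 𝓝[>] x, Real.cos (y * T) ≠ 0 := by
  by_contra h
  rw [Filter.not_frequently] at h
  have h' : {y : ℝ | Real.cos (y * T) = 0} ∈ 𝓝[>] x := by
    filter_upwards [h] with y hy
    simpa using hy
  obtain ⟨u, hu, hsub⟩ := mem_nhdsGT_iff_exists_Ioo_subset.1 h'
  have hc := (countable_cos_zero T hT).measure_zero MeasureTheory.volume
  have h0 : MeasureTheory.volume (Set.Ioo x u) = 0 :=
    le_antisymm (hc ▸ MeasureTheory.measure_mono hsub) zero_le
  rw [Real.volume_Ioo] at h0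
  rw [ENNReal.ofReal_eq_zero] at h0
  have := Set.mem_Ioi.1 hu
  linarith

private lemma contAt_tan_sum {q : ℕ} (c σ : Fin q → ℝ) (x : ℝ)
    (h : ∀ i, Real.cos (x * σ i) ≠ 0) :
    ContinuousAt (fun ω => ∑ i, c i * Real.tan (ω * σ i)) x := by
  apply tendsto_finset_sum
  intro i _
  have htan : ContinuousAt Real.tan (x * σ i) := Real.continuousAt_tan.2 (h i)
  have hmul : ContinuousAt (fun ω : ℝ => ω * σ i) x :=
    (continuous_id.mul continuous_const).continuousAt
  have hcomp : ContinuousAt (fun ω : ℝ => Real.tan (ω * σ i)) x :=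
    ContinuousAt.comp (f := fun ω : ℝ => ω * σ i) htan hmul
  exact continuousAt_const.mul hcomp

private lemma tan_sum_zero {p : ℕ} (c : Fin p → ℝ) (σ : Fin p → ℝ)
    (hσpos : ∀ i, 0 < σ i) (hσ : StrictMono σ)
    (h : ∀ ω : ℝ, 0 < ω → (∀ i, Real.cos (ω * σ i) ≠ 0) →
      ∑ i, c i * Real.tan (ω * σ i) = 0) :
    ∀ i, c i = 0 := by
  induction p with
  | zero => exact fun i => i.elim0
  | succ p ih =>
    set T := σ (Fin.last p) with hTdef
    have hT : 0 < T := hσpos _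
    set x0 := Real.pi / (2 * T) with hx0def
    have hx0 : 0 < x0 := by
      have := Real.pi_pos
      positivity
    have hx0T : x0 * T = Real.pi / 2 := by
      field_simp [hx0def]
      rw [hx0def]; field_simp [hT.ne']
    have hσle : ∀ i : Fin (p + 1), σ i ≤ T := fun i => hσ.monotone (Fin.le_last i)
    have hOn : ∀ ω ∈ Set.Ioo (0:ℝ) x0, ∑ i, c i * Real.tan (ω * σ i) = 0 := by
      intro ω hω
      refine h ω hω.1 fun i => ?_
      have h1 : 0 < ω * σ i := mul_pos hω.1 (hσpos i)
      have h2 : ω * σ i < Real.pi / 2 := by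
        calc ω * σ i ≤ ω * T := by nlinarith [hσle i, hω.1]
          _ < x0 * T := by nlinarith [hω.2]
          _ = Real.pi / 2 := hx0T
      exact ne_of_gt (Real.cos_pos_of_mem_Ioo ⟨by linarith [Real.pi_pos], h2⟩)
    set F : ℝ → ℝ := fun ω => ∑ i : Fin p, c i.castSucc * Real.tan (ω * σ i.castSucc)
      with hFdef
    have hsplit : ∀ ω : ℝ, ∑ i : Fin (p + 1), c i * Real.tan (ω * σ i)
        = F ω + c (Fin.last p) * Real.tan (ω * T) := by
      intro ω
      rw [Fin.sum_univ_castSucc]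
    have hltT : ∀ i : Fin p, σ i.castSucc < T := fun i => hσ (Fin.castSucc_lt_last i)
    have hcosCast : ∀ i : Fin p, Real.cos (x0 * σ i.castSucc) ≠ 0 := by
      intro i
      have h1 : 0 < x0 * σ i.castSucc := mul_pos hx0 (hσpos _)
      have h2 : x0 * σ i.castSucc < Real.pi / 2 := by
        calc x0 * σ i.castSucc < x0 * T := by nlinarith [hltT i]
          _ = Real.pi / 2 := hx0T
      exact ne_of_gt (Real.cos_pos_of_mem_Ioo ⟨by linarith [Real.pi_pos], h2⟩)
    have hFcont : ContinuousAt F x0 :=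
      contAt_tan_sum (fun i => c i.castSucc) (fun i => σ i.castSucc) x0 hcosCast
    have hmemIoo : Set.Ioo (0:ℝ) x0 ∈ 𝓝[<] x0 := by
      have h1 : Set.Ioi (0:ℝ) ∈ 𝓝[<] x0 :=
        mem_nhdsWithin_of_mem_nhds (Ioi_mem_nhds hx0)
      have h2 : Set.Iio x0 ∈ 𝓝[<] x0 := self_mem_nhdsWithin
      have := Filter.inter_mem h1 h2
      rwa [Set.Ioi_inter_Iio] at this
    have hlast : c (Fin.last p) = 0 := by
      by_contra hc
      have htendF : Filter.Tendsto (fun ω => -F ω / c (Fin.last p)) (𝓝[<] x0)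
          (𝓝 (-F x0 / c (Fin.last p))) :=
        ((hFcont.neg.div_const _)).tendsto.mono_left nhdsWithin_le_nhds
      have htan : Filter.Tendsto (fun ω => Real.tan (ω * T)) (𝓝[<] x0) Filter.atTop := by
        apply Real.tendsto_tan_pi_div_two.comp
        rw [tendsto_nhdsWithin_iff]
        constructor
        · have h1 : Filter.Tendsto (fun ω : ℝ => ω * T) (𝓝 x0) (𝓝 (x0 * T)) :=
            ((continuous_id.mul continuous_const).continuousAt)
          rw [hx0T] at h1
          exact h1.mono_left nhdsWithin_le_nhds
        · filter_upwards [self_mem_nhdsWithin] with ω hω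
          have : ω < x0 := hω
          have : ω * T < x0 * T := by nlinarith
          rw [hx0T] at this
          exact this
      have heqv : ∀ᶠ ω in 𝓝[<] x0, (fun ω => -F ω / c (Fin.last p)) ω
          = Real.tan (ω * T) := by
        filter_upwards [hmemIoo] with ω hω
        have h1 := hOn ω hω
        rw [hsplit] at h1
        rw [div_eq_iff hc]
        linear_combination -h1
      exact not_tendsto_atTop_of_tendsto_nhds (htendF.congr' heqv) htan
    have hrest : ∀ ω : ℝ, 0 < ω → (∀ i : Fin p, Real.cos (ω * σ i.castSucc) ≠ 0) →
        ∑ i : Fin p, c i.castSucc * Real.tan (ω * σ i.castSucc) = 0 := by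
      intro ω hω hcos
      have hcont : ContinuousAt F ω :=
        contAt_tan_sum (fun i => c i.castSucc) (fun i => σ i.castSucc) ω hcos
      have hev : ∀ᶠ y in 𝓝[>] ω,
          (0 < y ∧ ∀ i : Fin p, Real.cos (y * σ i.castSucc) ≠ 0) := by
        have h1 : ∀ᶠ y in 𝓝 ω, 0 < y := eventually_gt_nhds hω
        have h2 : ∀ᶠ y in 𝓝 ω, ∀ i : Fin p, Real.cos (y * σ i.castSucc) ≠ 0 := by
          rw [Filter.eventually_all]
          intro i
          exact ((Real.continuous_cos.comp
            (continuous_id.mul continuous_const)).continuousAt).eventually_ne (hcos i)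
        exact (h1.and h2).filter_mono nhdsWithin_le_nhds
      have hfreq : ∃ᶠ y in 𝓝[>] ω, F y = 0 := by
        refine ((freq_cos_ne T (ne_of_gt hT) ω).and_eventually hev).mono ?_
        rintro y ⟨hyT, hy0, hycos⟩
        have hall : ∀ i : Fin (p + 1), Real.cos (y * σ i) ≠ 0 := by
          intro i
          rcases Fin.eq_castSucc_or_eq_last i with ⟨j, rfl⟩ | rfl
          · exact hycos j
          · exact hyT
        have h1 := h y hy0 hall
        rw [hsplit, hlast, zero_mul, add_zero] at h1
        exact h1
      have hmem : F ω ∈ closure ({0} : Set ℝ) := by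
        apply mem_closure_of_frequently_of_tendsto
          (hfreq.mono fun y hy => Set.mem_singleton_iff.2 hy)
        exact hcont.tendsto.mono_left nhdsWithin_le_nhds
      simpa using hmem
    have hc' := ih (fun i => c i.castSucc) (fun i => σ i.castSucc)
      (fun i => hσpos _) (hσ.comp Fin.strictMono_castSucc) hrest
    intro i
    rcases Fin.eq_castSucc_or_eq_last i with ⟨j, rfl⟩ | rfl
    · exact hc' j
    · exact hlast

/-- **geometry identification for uniform lines.** If two finite families of
multiplicities and strictly increasing positive lengths give the same function
ω ↦ Σ_j n_j tan(ω τ_j) wherever all the tangents are defined, then the families coincide. -/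
theorem tan_sum_identifiability
    (m mt : ℕ) (hm : 0 < m) (hmt : 0 < mt)
    (n : Fin m → ℕ) (nt : Fin mt → ℕ)
    (hn : ∀ j, 0 < n j) (hnt : ∀ k, 0 < nt k)
    (τ : Fin m → ℝ) (τt : Fin mt → ℝ)
    (hτpos : ∀ j, 0 < τ j) (hτtpos : ∀ k, 0 < τt k)
    (hτmono : StrictMono τ) (hτtmono : StrictMono τt)
    (heq : ∀ ω : ℝ, 0 < ω →
      (∀ j, Real.cos (ω * τ j) ≠ 0) → (∀ k, Real.cos (ω * τt k) ≠ 0) →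
      ∑ j, (n j : ℝ) * Real.tan (ω * τ j) = ∑ k, (nt k : ℝ) * Real.tan (ω * τt k)) :
    ∃ h : m = mt, ∀ j : Fin m, τt (Fin.cast h j) = τ j ∧ nt (Fin.cast h j) = n j := by
  classical
  set S : Finset ℝ := (Finset.univ.image τ) ∪ (Finset.univ.image τt) with hS
  have hτmem : ∀ j, τ j ∈ S := fun j =>
    Finset.mem_union_left _ (Finset.mem_image_of_mem τ (Finset.mem_univ j))
  have hτtmem : ∀ k, τt k ∈ S := fun k =>
    Finset.mem_union_right _ (Finset.mem_image_of_mem τt (Finset.mem_univ k))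
  have hmemS : ∀ t ∈ S, (0:ℝ) < t := by
    intro t ht
    rcases Finset.mem_union.1 ht with h1 | h1 <;>
      obtain ⟨j, -, rfl⟩ := Finset.mem_image.1 h1
    · exact hτpos j
    · exact hτtpos j
  set q := S.card with hq
  set σ : Fin q → ℝ := fun i => S.orderEmbOfFin rfl i with hσdef
  have hσmono : StrictMono σ := (S.orderEmbOfFin rfl).strictMono
  have hσmem : ∀ i, σ i ∈ S := fun i => Finset.orderEmbOfFin_mem S rfl i
  have hσsurj : ∀ t ∈ S, ∃ i, σ i = t := by
    intro t ht
    have h1 : t ∈ Set.range (S.orderEmbOfFin rfl) := by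
      rw [Finset.range_orderEmbOfFin]
      exact ht
    exact h1
  have himg : Finset.univ.image σ = S := by
    ext t
    simp only [Finset.mem_image, Finset.mem_univ, true_and]
    constructor
    · rintro ⟨i, rfl⟩; exact hσmem i
    · intro ht; exact hσsurj t ht
  set cf : ℝ → ℝ := fun t =>
      (∑ j ∈ Finset.univ.filter (fun j => τ j = t), (n j : ℝ))
      - (∑ k ∈ Finset.univ.filter (fun k => τt k = t), (nt k : ℝ)) with hcf
  have hsum : ∀ ω : ℝ, 0 < ω → (∀ i, Real.cos (ω * σ i) ≠ 0) →
      ∑ i, cf (σ i) * Real.tan (ω * σ i) = 0 := by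
    intro ω hω hcos
    have hcosS : ∀ t ∈ S, Real.cos (ω * t) ≠ 0 := by
      intro t ht
      obtain ⟨i, rfl⟩ := hσsurj t ht
      exact hcos i
    have e1 : ∑ i, cf (σ i) * Real.tan (ω * σ i)
        = ∑ t ∈ S, cf t * Real.tan (ω * t) := by
      rw [← himg, Finset.sum_image (fun a _ b _ hab => hσmono.injective hab)]
    have e2 : ∑ t ∈ S, cf t * Real.tan (ω * t)
        = (∑ j, (n j : ℝ) * Real.tan (ω * τ j))
          - (∑ k, (nt k : ℝ) * Real.tan (ω * τt k)) := by
      simp only [hcf, sub_mul]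
      rw [Finset.sum_sub_distrib]
      congr 1
      · rw [← Finset.sum_fiberwise_of_maps_to (g := τ) (t := S)
          (fun j _ => hτmem j) (fun j => (n j : ℝ) * Real.tan (ω * τ j))]
        refine Finset.sum_congr rfl fun t _ => ?_
        rw [Finset.sum_mul]
        refine Finset.sum_congr rfl fun j hj => ?_
        rw [(Finset.mem_filter.1 hj).2]
      · rw [← Finset.sum_fiberwise_of_maps_to (g := τt) (t := S)
          (fun k _ => hτtmem k) (fun k => (nt k : ℝ) * Real.tan (ω * τt k))]
        refine Finset.sum_congr rfl fun t _ => ?_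
        rw [Finset.sum_mul]
        refine Finset.sum_congr rfl fun k hk => ?_
        rw [(Finset.mem_filter.1 hk).2]
    rw [e1, e2, heq ω hω (fun j => hcosS _ (hτmem j)) (fun k => hcosS _ (hτtmem k)),
      sub_self]
  have hcz : ∀ i, cf (σ i) = 0 :=
    tan_sum_zero (fun i => cf (σ i)) σ (fun i => hmemS _ (hσmem i)) hσmono hsum
  have hcfS : ∀ t ∈ S, cf t = 0 := by
    intro t ht
    obtain ⟨i, rfl⟩ := hσsurj t ht
    exact hcz i
  have hfilτ : ∀ j : Fin m, Finset.univ.filter (fun j' => τ j' = τ j) = {j} := by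
    intro j
    ext j'
    simp [hτmono.injective.eq_iff]
  have hkey : ∀ j, (n j : ℝ)
      = ∑ k ∈ Finset.univ.filter (fun k => τt k = τ j), (nt k : ℝ) := by
    intro j
    have h1 := hcfS (τ j) (hτmem j)
    rw [hcf] at h1
    have h2 := sub_eq_zero.1 h1
    rwa [hfilτ j, Finset.sum_singleton] at h2
  have hfilτt : ∀ k : Fin mt, Finset.univ.filter (fun k' => τt k' = τt k) = {k} := by
    intro k
    ext k'
    simp [hτtmono.injective.eq_iff]
  have hkey' : ∀ k, (nt k : ℝ)
      = ∑ j ∈ Finset.univ.filter (fun j => τ j = τt k), (n j : ℝ) := by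
    intro k
    have h1 := hcfS (τt k) (hτtmem k)
    rw [hcf] at h1
    have h2 := sub_eq_zero.1 h1
    rw [hfilτt k, Finset.sum_singleton] at h2
    exact h2.symm
  have hexists : ∀ j : Fin m, ∃ k, τt k = τ j := by
    intro j
    by_contra hne
    push_neg at hne
    have h1 : Finset.univ.filter (fun k => τt k = τ j) = ∅ :=
      Finset.filter_eq_empty_iff.2 fun k _ => hne k
    have h2 := hkey j
    rw [h1, Finset.sum_empty] at h2
    have := hn j
    rw [Nat.cast_eq_zero.1 h2] at this
    exact lt_irrefl 0 this
  have hexists' : ∀ k : Fin mt, ∃ j, τ j = τt k := by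
    intro k
    by_contra hne
    push_neg at hne
    have h1 : Finset.univ.filter (fun j => τ j = τt k) = ∅ :=
      Finset.filter_eq_empty_iff.2 fun j _ => hne j
    have h2 := hkey' k
    rw [h1, Finset.sum_empty] at h2
    have := hnt k
    rw [Nat.cast_eq_zero.1 h2] at this
    exact lt_irrefl 0 this
  have hrange : Set.range τ = Set.range τt := by
    ext t
    constructor
    · rintro ⟨j, rfl⟩
      obtain ⟨k, hk⟩ := hexists j
      exact ⟨k, hk⟩
    · rintro ⟨k, rfl⟩
      obtain ⟨j, hj⟩ := hexists' k
      exact ⟨j, hj⟩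
  have hcard : m = mt := by
    have h1 : (Finset.univ.image τ).card = m := by
      rw [Finset.card_image_of_injective _ hτmono.injective, Finset.card_univ,
        Fintype.card_fin]
    have h2 : (Finset.univ.image τt).card = mt := by
      rw [Finset.card_image_of_injective _ hτtmono.injective, Finset.card_univ,
        Fintype.card_fin]
    have himgeq : Finset.univ.image τ = Finset.univ.image τt := by
      apply Finset.coe_injective
      simp only [Finset.coe_image, Finset.coe_univ, Set.image_univ]
      exact hrange
    rw [← h1, himgeq, h2]
  subst hcard
  have hτeq : τt = τ := by
    have inst : WellFoundedLT (Fin m) := inferInstance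
    exact (StrictMono.range_inj hτtmono hτmono).1 hrange.symm
  refine ⟨rfl, fun j => ?_⟩
  have hcast : Fin.cast (rfl : m = m) j = j := rfl
  rw [hcast, hτeq]
  refine ⟨rfl, ?_⟩
  have h1 := hkey j
  rw [hτeq, hfilτ j, Finset.sum_singleton] at h1
  exact (Nat.cast_injective h1).symm
end

section
/- Let n ≥ 1, let λ_1,…,λ_n be distinct real numbers and c_1,…,c_n complex numbers, and set F(ω) = Σ_{k=1}^n c_k e^{iλ_kω}. If there exist constants C > 0 and Ω > 0 such that |F(ω)| ≤ C/ω for all ω ≥ Ω, then c_k = 0 for all k, i.e. F is identically zero. -/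
open Complex Filter intervalIntegral MeasureTheory

lemma aux_exp_norm (x : ℝ) : ‖Complex.exp (Complex.I * (x:ℂ))‖ = 1 := by
  simp [Complex.norm_exp]

lemma aux_exp_int_bound (μ : ℝ) (hμ : μ ≠ 0) (T : ℝ) :
    ‖∫ ω in (0:ℝ)..T, Complex.exp (Complex.I * (μ:ℂ) * (ω:ℂ))‖ ≤ 2 / |μ| := by
  have hc : (Complex.I * (μ:ℂ)) ≠ 0 := by
    simp [Complex.I_ne_zero, Complex.ofReal_ne_zero, hμ]
  have heq : (fun ω : ℝ => Complex.exp (Complex.I * (μ:ℂ) * (ω:ℂ)))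
      = fun ω : ℝ => Complex.exp ((Complex.I * (μ:ℂ)) * (ω:ℂ)) := by
    funext ω; ring_nf
  rw [heq, integral_exp_mul_complex hc, norm_div]
  have h2 : ‖Complex.I * (μ:ℂ)‖ = |μ| := by simp
  rw [h2]
  gcongr
  calc ‖Complex.exp (Complex.I * (μ:ℂ) * (T:ℂ)) - Complex.exp (Complex.I * (μ:ℂ) * ((0:ℝ):ℂ))‖
      ≤ ‖Complex.exp (Complex.I * (μ:ℂ) * (T:ℂ))‖ + ‖Complex.exp (Complex.I * (μ:ℂ) * ((0:ℝ):ℂ))‖ := norm_sub_le _ _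
    _ ≤ 2 := by
        have a1 : ‖Complex.exp (Complex.I * (μ:ℂ) * (T:ℂ))‖ = 1 := by
          have := aux_exp_norm (μ * T); rw [← this]; congr 1; push_cast; ring
        have a2 : ‖Complex.exp (Complex.I * (μ:ℂ) * ((0:ℝ):ℂ))‖ = 1 := by
          have := aux_exp_norm (μ * 0); rw [← this]; congr 1; push_cast; ring
        rw [a1, a2]; norm_num

lemma aux_tendsto_ne (μ : ℝ) (hμ : μ ≠ 0) :
    Tendsto (fun T : ℝ => (∫ ω in (0:ℝ)..T, Complex.exp (Complex.I * (μ:ℂ) * (ω:ℂ))) / (T:ℂ))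
      atTop (nhds 0) := by
  apply squeeze_zero_norm' (a := fun T : ℝ => (2 / |μ|) / T)
  · filter_upwards [eventually_gt_atTop (0:ℝ)] with T hT
    rw [norm_div]
    have : ‖(T:ℂ)‖ = T := by simp [abs_of_pos hT]
    rw [this]
    gcongr
    exact aux_exp_int_bound μ hμ T
  · simpa using tendsto_const_nhds.div_atTop (tendsto_id (α := ℝ))

lemma aux_tendsto_eq :
    Tendsto (fun T : ℝ => (∫ ω in (0:ℝ)..T, Complex.exp (Complex.I * ((0:ℝ):ℂ) * (ω:ℂ))) / (T:ℂ))
      atTop (nhds 1) := by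
  have : ∀ᶠ T : ℝ in atTop,
      (∫ ω in (0:ℝ)..T, Complex.exp (Complex.I * ((0:ℝ):ℂ) * (ω:ℂ))) / (T:ℂ) = 1 := by
    filter_upwards [eventually_gt_atTop (0:ℝ)] with T hT
    have : (fun ω : ℝ => Complex.exp (Complex.I * ((0:ℝ):ℂ) * (ω:ℂ))) = fun _ : ℝ => (1:ℂ) := by
      funext ω; simp
    rw [this, intervalIntegral.integral_const]
    simp
    exact_mod_cast hT.ne'
  exact Tendsto.congr' (Filter.EventuallyEq.symm this) tendsto_const_nhds

/-- A trigonometric polynomial F(ω) = Σ_k c_k e^{iλ_k ω} with distinct real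
frequencies that decays like C/ω as ω → ∞ is identically zero. -/
theorem trig_polynomial_decay_zero
    (n : ℕ) (hn : 0 < n) (lam : Fin n → ℝ) (hlam : Function.Injective lam)
    (c : Fin n → ℂ)
    (hdecay : ∃ C > (0:ℝ), ∃ Ω > (0:ℝ), ∀ ω ≥ Ω,
      ‖∑ k, c k * Complex.exp (Complex.I * (lam k : ℂ) * (ω : ℂ))‖ ≤ C / ω) :
    ∀ k, c k = 0 := by
  obtain ⟨C, hC, Ω, hΩ, hdec⟩ := hdecay
  intro j
  set F : ℝ → ℂ := fun ω => ∑ k, c k * Complex.exp (Complex.I * (lam k : ℂ) * (ω : ℂ)) with hFdef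
  have hFcont : Continuous F := by
    apply continuous_finset_sum
    intro k _
    exact continuous_const.mul (Complex.continuous_exp.comp (by continuity))
  set G : ℝ → ℂ := fun T => ∫ ω in (0:ℝ)..T, F ω * Complex.exp (-(Complex.I * (lam j:ℂ) * (ω:ℂ))) with hGdef
  -- pointwise rewriting of the integrand
  have hptwise : ∀ ω : ℝ, F ω * Complex.exp (-(Complex.I * (lam j:ℂ) * (ω:ℂ)))
      = ∑ k, c k * Complex.exp (Complex.I * ((lam k - lam j : ℝ):ℂ) * (ω:ℂ)) := by
    intro ω
    rw [hFdef]
    simp only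
    rw [Finset.sum_mul]
    refine Finset.sum_congr rfl fun k _ => ?_
    rw [mul_assoc, ← Complex.exp_add]
    congr 1
    push_cast
    ring
  have hintk : ∀ (μ : ℝ) (T : ℝ),
      IntervalIntegrable (fun ω : ℝ => Complex.exp (Complex.I * (μ:ℂ) * (ω:ℂ))) volume 0 T := by
    intro μ T
    apply Continuous.intervalIntegrable
    exact Complex.continuous_exp.comp (by continuity)
  have hGeq : ∀ T : ℝ, G T = ∑ k, c k * ∫ ω in (0:ℝ)..T, Complex.exp (Complex.I * ((lam k - lam j : ℝ):ℂ) * (ω:ℂ)) := by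
    intro T
    rw [hGdef]
    simp only
    rw [show (fun ω : ℝ => F ω * Complex.exp (-(Complex.I * (lam j:ℂ) * (ω:ℂ))))
        = fun ω : ℝ => ∑ k, c k * Complex.exp (Complex.I * ((lam k - lam j : ℝ):ℂ) * (ω:ℂ)) from funext hptwise]
    rw [intervalIntegral.integral_finset_sum]
    · exact Finset.sum_congr rfl fun k _ => intervalIntegral.integral_const_mul _ _
    · intro k _
      exact (hintk _ T).const_mul _
  -- Limit 1 : G T / T → c j
  have hlim1 : Tendsto (fun T : ℝ => G T / (T:ℂ)) atTop (nhds (c j)) := by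
    have hsum : ∀ T : ℝ, G T / (T:ℂ)
        = ∑ k, c k * ((∫ ω in (0:ℝ)..T, Complex.exp (Complex.I * ((lam k - lam j : ℝ):ℂ) * (ω:ℂ))) / (T:ℂ)) := by
      intro T
      rw [hGeq T, Finset.sum_div]
      exact Finset.sum_congr rfl fun k _ => (mul_div_assoc _ _ _)
    rw [show (fun T : ℝ => G T / (T:ℂ)) = fun T : ℝ =>
        ∑ k, c k * ((∫ ω in (0:ℝ)..T, Complex.exp (Complex.I * ((lam k - lam j : ℝ):ℂ) * (ω:ℂ))) / (T:ℂ)) from funext hsum]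
    have : (c j) = ∑ k, c k * (if k = j then 1 else 0) := by
      simp [Finset.sum_ite_eq']
    rw [this]
    apply tendsto_finset_sum
    intro k _
    by_cases hk : k = j
    · subst hk
      simp only [if_pos rfl, mul_one]
      have h0 : lam k - lam k = 0 := by ring
      rw [h0]
      exact (aux_tendsto_eq.const_mul (c k)).congr (fun T => rfl) |>.mono_right (by simp)
    · rw [if_neg hk, mul_zero]
      have hμ : lam k - lam j ≠ 0 := sub_ne_zero.mpr (fun h => hk (hlam h))
      have := (aux_tendsto_ne _ hμ).const_mul (c k)
      simpa using this
  -- Limit 2 : G T / T → 0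
  have hlim2 : Tendsto (fun T : ℝ => G T / (T:ℂ)) atTop (nhds 0) := by
    set K : ℝ := ∫ ω in (0:ℝ)..Ω, ‖F ω‖ with hK
    have hFnorm : ∀ ω : ℝ, ‖F ω * Complex.exp (-(Complex.I * (lam j:ℂ) * (ω:ℂ)))‖ = ‖F ω‖ := by
      intro ω
      rw [norm_mul]
      have : ‖Complex.exp (-(Complex.I * (lam j:ℂ) * (ω:ℂ)))‖ = 1 := by
        have := aux_exp_norm (-(lam j * ω))
        rw [← this]; congr 1; push_cast; ring
      rw [this, mul_one]
    have hbound : ∀ T : ℝ, T ≥ max Ω 1 →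
        ‖G T / (T:ℂ)‖ ≤ (K + C * (Real.log T - Real.log Ω)) / T := by
      intro T hT
      have hTΩ : Ω ≤ T := le_trans (le_max_left _ _) hT
      have hT1 : (1:ℝ) ≤ T := le_trans (le_max_right _ _) hT
      have hTpos : (0:ℝ) < T := lt_of_lt_of_le one_pos hT1
      have hnormG : ‖G T‖ ≤ K + C * (Real.log T - Real.log Ω) := by
        have hInt : Continuous fun ω : ℝ => F ω * Complex.exp (-(Complex.I * (lam j:ℂ) * (ω:ℂ))) := by
          exact hFcont.mul (Complex.continuous_exp.comp (by continuity))
        have step1 : ‖G T‖ ≤ ∫ ω in (0:ℝ)..T, ‖F ω‖ := by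
          rw [hGdef]
          simp only
          have := intervalIntegral.norm_integral_le_integral_norm
            (f := fun ω : ℝ => F ω * Complex.exp (-(Complex.I * (lam j:ℂ) * (ω:ℂ))))
            (μ := volume) (a := (0:ℝ)) (b := T) (le_trans hΩ.le hTΩ)
          calc ‖∫ ω in (0:ℝ)..T, F ω * Complex.exp (-(Complex.I * (lam j:ℂ) * (ω:ℂ)))‖
              ≤ ∫ ω in (0:ℝ)..T, ‖F ω * Complex.exp (-(Complex.I * (lam j:ℂ) * (ω:ℂ)))‖ := this
            _ = ∫ ω in (0:ℝ)..T, ‖F ω‖ := by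
                refine intervalIntegral.integral_congr fun ω _ => hFnorm ω
        have hsplit : (∫ ω in (0:ℝ)..T, ‖F ω‖)
            = K + ∫ ω in Ω..T, ‖F ω‖ := by
          rw [hK]
          rw [← intervalIntegral.integral_add_adjacent_intervals
            (a := (0:ℝ)) (b := Ω) (c := T)
            ((hFcont.norm).intervalIntegrable _ _) ((hFcont.norm).intervalIntegrable _ _)]
        have htail : (∫ ω in Ω..T, ‖F ω‖) ≤ C * (Real.log T - Real.log Ω) := by
          have h1 : (∫ ω in Ω..T, ‖F ω‖) ≤ ∫ ω in Ω..T, C / ω := by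
            apply intervalIntegral.integral_mono_on hTΩ
              ((hFcont.norm).intervalIntegrable _ _)
            · apply ContinuousOn.intervalIntegrable
              apply ContinuousOn.div continuousOn_const continuousOn_id
              intro x hx
              rw [Set.uIcc_of_le hTΩ] at hx
              exact ne_of_gt (lt_of_lt_of_le hΩ hx.1)
            · intro x hx
              have hxΩ : Ω ≤ x := hx.1
              simpa using hdec x hxΩ
          have h2 : (∫ ω in Ω..T, C / ω) = C * (Real.log T - Real.log Ω) := by
            have : (fun ω : ℝ => C / ω) = fun ω : ℝ => C * (1 / ω) := by
              funext ω; ring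
            rw [this, intervalIntegral.integral_const_mul, integral_one_div]
            · rw [Real.log_div (ne_of_gt hTpos) (ne_of_gt hΩ)]
            · intro h
              rw [Set.uIcc_of_le hTΩ] at h
              exact absurd h.1 (not_le.mpr hΩ)
          linarith
        calc ‖G T‖ ≤ ∫ ω in (0:ℝ)..T, ‖F ω‖ := step1
          _ = K + ∫ ω in Ω..T, ‖F ω‖ := hsplit
          _ ≤ K + C * (Real.log T - Real.log Ω) := by linarith
      rw [norm_div]
      have hTn : ‖(T:ℂ)‖ = T := by simp [abs_of_pos hTpos]
      rw [hTn]
      gcongr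
    apply squeeze_zero_norm' (a := fun T : ℝ => (K + C * (Real.log T - Real.log Ω)) / T)
    · filter_upwards [eventually_ge_atTop (max Ω 1)] with T hT
      exact hbound T hT
    · have h1 : Tendsto (fun T : ℝ => (K - C * Real.log Ω) / T) atTop (nhds 0) :=
        tendsto_const_nhds.div_atTop tendsto_id
      have h2 : Tendsto (fun T : ℝ => C * (Real.log T / T)) atTop (nhds 0) := by
        have := Real.isLittleO_log_id_atTop.tendsto_div_nhds_zero
        simpa using this.const_mul C
      have heq : (fun T : ℝ => (K + C * (Real.log T - Real.log Ω)) / T)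
          = fun T : ℝ => (K - C * Real.log Ω) / T + C * (Real.log T / T) := by
        funext T; ring
      rw [heq]
      simpa using h1.add h2
  exact tendsto_nhds_unique hlim1 hlim2
end

section
/- Let a < b be real numbers, let Z_c : [a,b] → ℝ be positive and twice continuously differentiable, let ω ∈ ℝ, and let V, I : [a,b] → ℂ be differentiable functions satisfying the (Liouville-transformed) Telegrapher's equations V'(x) = iω Z_c(x) I(x) and I'(x) = iω Z_c(x)^{-1} V(x) on [a,b]. Define y(x) = Z_c(x)^{-1/2} V(x) and q(x) = Z_c(x)^{1/2} · (Z_c^{-1/2})''(x). Then y is twice differentiable on [a,b] and satisfies the Schrödinger equation −y''(x) + q(x) y(x) = ω² y(x) for all x ∈ [a,b]. -/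
/-- **Telegrapher to Schrodinger.** If V, I solve the Liouville-transformed
lossless Telegrapher's equations V' = iω Z_c I, I' = iω Z_c⁻¹ V on [a,b], then
y = Z_c^{-1/2} V is twice differentiable on [a,b] and solves −y'' + q y = ω² y with
q = Z_c^{1/2} (Z_c^{-1/2})''. -/
theorem telegrapher_to_schrodinger
    (a b : ℝ) (hab : a < b) (Zc : ℝ → ℝ) (hZc : ContDiff ℝ 2 Zc)
    (hpos : ∀ x ∈ Set.Icc a b, 0 < Zc x) (ω : ℝ) (V I : ℝ → ℂ)
    (hV : ∀ x ∈ Set.Icc a b,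
      HasDerivAt V (Complex.I * (ω : ℂ) * (Zc x : ℂ) * I x) x)
    (hI : ∀ x ∈ Set.Icc a b,
      HasDerivAt I (Complex.I * (ω : ℂ) * ((Zc x : ℂ))⁻¹ * V x) x)
    (q : ℝ → ℝ)
    (hq : ∀ x, q x = Real.sqrt (Zc x) * deriv (deriv fun t => (Real.sqrt (Zc t))⁻¹) x)
    (y : ℝ → ℂ)
    (hy : ∀ x, y x = ((Real.sqrt (Zc x))⁻¹ : ℝ) * V x) :
    ∃ y' y'' : ℝ → ℂ,
      (∀ x ∈ Set.Icc a b, HasDerivAt y (y' x) x) ∧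
      (∀ x ∈ Set.Icc a b, HasDerivAt y' (y'' x) x) ∧
      ∀ x ∈ Set.Icc a b, -y'' x + (q x : ℂ) * y x = (ω : ℂ) ^ 2 * y x := by
  have hZdiff : Differentiable ℝ Zc := hZc.differentiable two_ne_zero
  have hZ'diff : Differentiable ℝ (deriv Zc) := by
    have h2 : ContDiff ℝ ((1 : WithTop ℕ∞) + 1) Zc := by
      convert hZc using 2
      exact one_add_one_eq_two
    exact (contDiff_succ_iff_deriv.mp h2).2.2.differentiable one_ne_zero
  set F : ℝ → ℝ := fun t => (Real.sqrt (Zc t))⁻¹ with hFdef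
  set U : Set ℝ := {x | 0 < Zc x} with hUdef
  have hUopen : IsOpen U := isOpen_lt continuous_const hZc.continuous
  have hIccU : Set.Icc a b ⊆ U := fun x hx => hpos x hx
  set F1 : ℝ → ℝ :=
    fun x => -(deriv Zc x / (2 * Real.sqrt (Zc x))) / Real.sqrt (Zc x) ^ 2 with hF1def
  have hsd : ∀ x ∈ U, HasDerivAt (fun t => Real.sqrt (Zc t))
      (deriv Zc x / (2 * Real.sqrt (Zc x))) x := by
    intro x hx
    exact (hZdiff x).hasDerivAt.sqrt (ne_of_gt hx)
  have hFd : ∀ x ∈ U, HasDerivAt F (F1 x) x := by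
    intro x hx
    have hs0 : Real.sqrt (Zc x) ≠ 0 := ne_of_gt (Real.sqrt_pos.mpr hx)
    exact (hsd x hx).inv hs0
  have hF1d : ∀ x ∈ U, DifferentiableAt ℝ F1 x := by
    intro x hx
    have hs0 : Real.sqrt (Zc x) ≠ 0 := ne_of_gt (Real.sqrt_pos.mpr hx)
    have hsx : DifferentiableAt ℝ (fun t => Real.sqrt (Zc t)) x :=
      (hsd x hx).differentiableAt
    have h2s : (2 : ℝ) * Real.sqrt (Zc x) ≠ 0 := by
      simp [hs0]
    have hsq : Real.sqrt (Zc x) ^ 2 ≠ 0 := pow_ne_zero _ hs0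
    exact (((hZ'diff x).div ((differentiableAt_const _).mul hsx) h2s).neg).div
      (hsx.pow 2) hsq
  set F2 : ℝ → ℝ := deriv F1 with hF2def
  have hF1d' : ∀ x ∈ U, HasDerivAt F1 (F2 x) x := fun x hx => (hF1d x hx).hasDerivAt
  -- q x = sqrt (Zc x) * F2 x on U
  have hqF2 : ∀ x ∈ U, q x = Real.sqrt (Zc x) * F2 x := by
    intro x hx
    have hev : deriv F =ᶠ[nhds x] F1 :=
      Filter.eventuallyEq_of_mem (hUopen.mem_nhds hx) (fun t ht => (hFd t ht).deriv)
    have hdd : deriv (deriv F) x = deriv F1 x := hev.deriv_eq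
    rw [hq x]
    exact congrArg (fun r => Real.sqrt (Zc x) * r) hdd
  -- key algebraic identity
  have key : ∀ x ∈ U, 2 * F1 x * Zc x + F x * deriv Zc x = 0 := by
    intro x hx
    have hs0 : Real.sqrt (Zc x) ≠ 0 := ne_of_gt (Real.sqrt_pos.mpr hx)
    have hsq : Real.sqrt (Zc x) ^ 2 = Zc x := Real.sq_sqrt (le_of_lt hx)
    simp only [hF1def, hFdef]
    rw [← hsq]
    field_simp
    rw [Real.sqrt_sq (Real.sqrt_nonneg (Zc x))]
    ring
  refine ⟨fun x => (F1 x : ℂ) * V x + (F x : ℂ) * (Complex.I * (ω : ℂ) * (Zc x : ℂ) * I x),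
    fun x => (F2 x : ℂ) * V x + (F1 x : ℂ) * (Complex.I * (ω : ℂ) * (Zc x : ℂ) * I x)
      + Complex.I * (ω : ℂ) * (((F1 x * Zc x + F x * deriv Zc x : ℝ) : ℂ) * I x
        + ((F x * Zc x : ℝ) : ℂ) * (Complex.I * (ω : ℂ) * ((Zc x : ℂ))⁻¹ * V x)),
    ?_, ?_, ?_⟩
  · intro x hx
    have hxU : x ∈ U := hIccU hx
    have hFc : HasDerivAt (fun t => ((F t : ℝ) : ℂ)) ((F1 x : ℝ) : ℂ) x :=
      (hFd x hxU).ofReal_comp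
    have hmul := hFc.mul (hV x hx)
    have hyfun : y = fun t => ((F t : ℝ) : ℂ) * V t := by
      funext t
      rw [hy t]
    rw [hyfun]
    exact hmul
  · intro x hx
    have hxU : x ∈ U := hIccU hx
    have h1 : HasDerivAt (fun t => ((F1 t : ℝ) : ℂ) * V t)
        ((F2 x : ℂ) * V x + (F1 x : ℂ) * (Complex.I * (ω : ℂ) * (Zc x : ℂ) * I x)) x :=
      (hF1d' x hxU).ofReal_comp.mul (hV x hx)
    have hGd : HasDerivAt (fun t => F t * Zc t) (F1 x * Zc x + F x * deriv Zc x) x :=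
      (hFd x hxU).mul (hZdiff x).hasDerivAt
    have h2 : HasDerivAt (fun t => ((F t * Zc t : ℝ) : ℂ) * I t)
        (((F1 x * Zc x + F x * deriv Zc x : ℝ) : ℂ) * I x
          + ((F x * Zc x : ℝ) : ℂ) * (Complex.I * (ω : ℂ) * ((Zc x : ℂ))⁻¹ * V x)) x :=
      hGd.ofReal_comp.mul (hI x hx)
    have h3 := h1.add (h2.const_mul (Complex.I * (ω : ℂ)))
    refine h3.congr_of_eventuallyEq (Filter.Eventually.of_forall fun t => ?_)
    simp only [Pi.add_apply]
    push_cast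
    ring
  · intro x hx
    have hxU : x ∈ U := hIccU hx
    have hs0 : Real.sqrt (Zc x) ≠ 0 := ne_of_gt (Real.sqrt_pos.mpr hxU)
    have hs0c : ((Real.sqrt (Zc x) : ℝ) : ℂ) ≠ 0 := by exact_mod_cast hs0
    have hz0 : (Zc x : ℂ) ≠ 0 := by
      exact_mod_cast ne_of_gt (hpos x hx)
    have hzinv : (Zc x : ℂ) * ((Zc x : ℂ))⁻¹ = 1 := mul_inv_cancel₀ hz0
    have hsinv : ((Real.sqrt (Zc x) : ℝ) : ℂ) * (((Real.sqrt (Zc x) : ℝ) : ℂ))⁻¹ = 1 :=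
      mul_inv_cancel₀ hs0c
    have kr := key x hxU
    simp only [hFdef] at kr
    have hkeyC : 2 * (F1 x : ℂ) * (Zc x : ℂ)
        + (((Real.sqrt (Zc x) : ℝ) : ℂ))⁻¹ * ((deriv Zc x : ℝ) : ℂ) = 0 := by
      exact_mod_cast kr
    rw [hqF2 x hxU, hy x]
    simp only [hFdef]
    push_cast
    linear_combination ((F2 x : ℂ) * V x) * hsinv
      - Complex.I * (ω : ℂ) * I x * hkeyC
      + (ω : ℂ) ^ 2 * (((Real.sqrt (Zc x) : ℝ) : ℂ))⁻¹ * V x * hzinv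
      - V x * (ω : ℂ) ^ 2 * (Zc x : ℂ) * (((Real.sqrt (Zc x) : ℝ) : ℂ))⁻¹
        * ((Zc x : ℂ))⁻¹ * Complex.I_sq
end

section
/- Let a < b be real numbers, let Z_c : [a,b] → ℝ be positive and continuously differentiable, let ω ∈ ℝ, and let V, I : [a,b] → ℂ be differentiable functions satisfying V'(x) = iω Z_c(x) I(x) and I'(x) = iω Z_c(x)^{-1} V(x) on [a,b]. Define Q(x) = Z_c'(x)/(2 Z_c(x)) and V_±(x) = (1/2)(V(x) ± Z_c(x) I(x)), and assume V_+(x) ≠ 0 for all x ∈ [a,b]. Then the reflection coefficient R(x) := e^{2iωx} V_-(x)/V_+(x) is differentiable and satisfies the Riccati equation R'(x) − e^{−2iωx} Q(x) R(x)² + Q(x) e^{2iωx} = 0 for all x ∈ [a,b]. -/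
/-- **Riccati equation for the reflection coefficient.** The local reflection
coefficient R(x) = e^{2iωx} V_-(x)/V_+(x) of a solution of the Liouville-transformed lossless
Telegrapher's equations satisfies R' − e^{−2iωx} Q R² + Q e^{2iωx} = 0, where
Q = Z_c'/(2 Z_c). -/
theorem riccati_reflection
    (a b : ℝ) (hab : a < b) (Zc : ℝ → ℝ) (hZc : ContDiff ℝ 1 Zc)
    (hpos : ∀ x ∈ Set.Icc a b, 0 < Zc x) (ω : ℝ) (V I : ℝ → ℂ)
    (hV : ∀ x ∈ Set.Icc a b,
      HasDerivAt V (Complex.I * (ω : ℂ) * (Zc x : ℂ) * I x) x)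
    (hI : ∀ x ∈ Set.Icc a b,
      HasDerivAt I (Complex.I * (ω : ℂ) * ((Zc x : ℂ))⁻¹ * V x) x)
    (Q : ℝ → ℝ) (hQ : ∀ x, Q x = deriv Zc x / (2 * Zc x))
    (Vp Vm : ℝ → ℂ)
    (hVp : ∀ x, Vp x = (1 / 2 : ℂ) * (V x + (Zc x : ℂ) * I x))
    (hVm : ∀ x, Vm x = (1 / 2 : ℂ) * (V x - (Zc x : ℂ) * I x))
    (hVp0 : ∀ x ∈ Set.Icc a b, Vp x ≠ 0)
    (R : ℝ → ℂ)
    (hR : ∀ x, R x = Complex.exp (2 * Complex.I * (ω : ℂ) * (x : ℂ)) * Vm x / Vp x) :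
    ∃ R' : ℝ → ℂ,
      (∀ x ∈ Set.Icc a b, HasDerivAt R (R' x) x) ∧
      ∀ x ∈ Set.Icc a b,
        R' x - Complex.exp (-(2 * Complex.I * (ω : ℂ) * (x : ℂ))) * (Q x : ℂ) * (R x) ^ 2 +
          (Q x : ℂ) * Complex.exp (2 * Complex.I * (ω : ℂ) * (x : ℂ)) = 0 := by
  classical
  refine ⟨fun x => Complex.exp (-(2 * Complex.I * (ω : ℂ) * (x : ℂ))) * (Q x : ℂ) * (R x) ^ 2
      - (Q x : ℂ) * Complex.exp (2 * Complex.I * (ω : ℂ) * (x : ℂ)), ?_, ?_⟩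
  · intro x hx
    have hZcd : HasDerivAt Zc (deriv Zc x) x :=
      ((hZc.differentiable one_ne_zero) x).hasDerivAt
    have hZcC : HasDerivAt (fun t : ℝ => ((Zc t : ℝ) : ℂ)) ((deriv Zc x : ℝ) : ℂ) x :=
      hZcd.ofReal_comp
    have hVpD : HasDerivAt Vp ((1 / 2 : ℂ) *
        (Complex.I * (ω : ℂ) * (Zc x : ℂ) * I x +
          (((deriv Zc x : ℝ) : ℂ) * I x +
            (Zc x : ℂ) * (Complex.I * (ω : ℂ) * ((Zc x : ℂ))⁻¹ * V x)))) x := by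
      have h := ((hV x hx).add (hZcC.mul (hI x hx))).const_mul (1 / 2 : ℂ)
      have : Vp = fun t => (1 / 2 : ℂ) * (V t + (Zc t : ℂ) * I t) := funext hVp
      rw [this]
      exact h
    have hVmD : HasDerivAt Vm ((1 / 2 : ℂ) *
        (Complex.I * (ω : ℂ) * (Zc x : ℂ) * I x -
          (((deriv Zc x : ℝ) : ℂ) * I x +
            (Zc x : ℂ) * (Complex.I * (ω : ℂ) * ((Zc x : ℂ))⁻¹ * V x)))) x := by
      have h := ((hV x hx).sub (hZcC.mul (hI x hx))).const_mul (1 / 2 : ℂ)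
      have : Vm = fun t => (1 / 2 : ℂ) * (V t - (Zc t : ℂ) * I t) := funext hVm
      rw [this]
      exact h
    have hid : HasDerivAt (fun t : ℝ => ((t : ℝ) : ℂ)) ((1 : ℝ) : ℂ) x :=
      (hasDerivAt_id x).ofReal_comp
    have hE : HasDerivAt (fun t : ℝ => Complex.exp (2 * Complex.I * (ω : ℂ) * (t : ℂ)))
        (Complex.exp (2 * Complex.I * (ω : ℂ) * (x : ℂ)) * (2 * Complex.I * (ω : ℂ) * 1)) x :=
      (hid.const_mul (2 * Complex.I * (ω : ℂ))).cexp
    have hRD := ((hE.mul hVmD).div hVpD (hVp0 x hx))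
    have hRfun : R = (fun t : ℝ => Complex.exp (2 * Complex.I * (ω : ℂ) * (t : ℂ))) * Vm / Vp :=
      funext hR
    rw [← hRfun] at hRD
    convert hRD using 1
    · rfl
    simp only [Pi.mul_apply]
    have hZne : ((Zc x : ℝ) : ℂ) ≠ 0 := by
      exact_mod_cast (hpos x hx).ne'
    have hPne : Vp x ≠ 0 := hVp0 x hx
    have hEne : Complex.exp (2 * Complex.I * (ω : ℂ) * (x : ℂ)) ≠ 0 := Complex.exp_ne_zero _
    have hVval : V x = Vp x + Vm x := by rw [hVp x, hVm x]; ring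
    have hIval : I x = (Vp x - Vm x) / ((Zc x : ℝ) : ℂ) := by
      rw [eq_div_iff hZne, hVp x, hVm x]; ring
    rw [hR x, hQ x, hVval, hIval, Complex.exp_neg]
    push_cast
    field_simp [hEne, hZne, hPne]
    have he' : Complex.exp (2 * Complex.I * (ω : ℂ) * (x : ℂ)) *
        (Complex.exp (2 * Complex.I * (ω : ℂ) * (x : ℂ)))⁻¹ = 1 := mul_inv_cancel₀ hEne
    have hz' : ((Zc x : ℝ) : ℂ) * ((Zc x : ℝ) : ℂ)⁻¹ = 1 := mul_inv_cancel₀ hZne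
    have hp' : Vp x * (Vp x)⁻¹ = 1 := mul_inv_cancel₀ hPne
    set d := ((deriv Zc x : ℝ) : ℂ)
    set e := Complex.exp (2 * Complex.I * (ω : ℂ) * (x : ℂ))
    set z := ((Zc x : ℝ) : ℂ)
    set p := Vp x
    set m := Vm x
    ring
  · intro x hx
    ring
end
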